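/- Let G be a 15-tough (P2 ∪ P3)-free graph on n vertices, let C be a non-Hamiltonian cycle of G, and let P be an (x,z)-path contained in G - V(C). If both x and z have more than 4.5n/16 neighbors in V(C), then G has a cycle C' with vertex set V(C) ∪ V(P). -/

import Mathlib

set_option maxHeartbeats 1600000

open SimpleGraph

variable {V : Type*}

/-- The disjoint union `P2 ∪ P3`: edge 0-1, path 2-3-4, on `Fin 5`. -/
def P2P3 : SimpleGraph (Fin 5) := SimpleGraph.fromRel (fun a b =>
  (a = 0 ∧ b = 1) ∨ (a = 2 ∧ b = 3) ∨ (a = 3 ∧ b = 4))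

/-- `G` has no induced subgraph isomorphic to `P2 ∪ P3`. -/
def P2P3Free (G : SimpleGraph V) : Prop :=
  ¬ ∃ f : Fin 5 ↪ V, ∀ a b, P2P3.Adj a b ↔ G.Adj (f a) (f b)

/-- The number of connected components of `G - S`. -/
noncomputable def numComponents [Fintype V] (G : SimpleGraph V) (S : Finset V) : ℕ :=
  Nat.card ((G.induce ((↑S : Set V)ᶜ)).ConnectedComponent)

/-- `G` is `t`-tough: `|S| ≥ t·c(G-S)` whenever `c(G-S) ≥ 2`. -/
def IsTough [Fintype V] (t : ℝ) (G : SimpleGraph V) : Prop :=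
  ∀ S : Finset V, 2 ≤ numComponents G S → t * numComponents G S ≤ S.card

section Aux
open SimpleGraph List
variable {G : SimpleGraph V}


section zseg
variable {m : ℕ} [NeZero m]

/-- arc of the cycle enumeration: `f b, f (b+1), ..., f (b+k-1)` -/
def zseg (f : ZMod m → V) (b : ZMod m) (k : ℕ) : List V :=
  (List.range k).map (fun t : ℕ => f (b + (t : ZMod m)))

@[simp] lemma zseg_length (f : ZMod m → V) (b : ZMod m) (k : ℕ) : (zseg f b k).length = k := by
  simp [zseg]

lemma zseg_ne_nil (f : ZMod m → V) (b : ZMod m) {k : ℕ} (hk : 1 ≤ k) : zseg f b k ≠ [] := by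
  intro h
  have := congrArg List.length h
  simp [zseg] at this
  omega

lemma zseg_head? (f : ZMod m → V) (b : ZMod m) {k : ℕ} (hk : 1 ≤ k) :
    (zseg f b k).head? = some (f b) := by
  obtain ⟨k', rfl⟩ : ∃ k', k = k' + 1 := ⟨k - 1, by omega⟩
  rw [zseg, List.range_succ_eq_map]
  simp

lemma zseg_getLast? (f : ZMod m → V) (b : ZMod m) {k : ℕ} (hk : 1 ≤ k) :
    (zseg f b k).getLast? = some (f (b + k - 1)) := by
  obtain ⟨k', rfl⟩ : ∃ k', k = k' + 1 := ⟨k - 1, by omega⟩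
  rw [zseg, List.range_succ]
  rw [List.map_append]
  simp only [List.map_cons, List.map_nil]
  rw [List.getLast?_concat]
  congr 2
  push_cast
  ring

lemma zseg_chain (f : ZMod m → V) (hadj : ∀ i, G.Adj (f i) (f (i + 1))) (b : ZMod m) (k : ℕ) :
    (zseg f b k).Chain' G.Adj := by
  rw [zseg]; simp only [List.Chain']; rw [List.isChain_map]
  cases k with
  | zero => simp
  | succ k' =>
    rw [List.isChain_range_succ]
    intro t _
    have : b + (↑(t + 1) : ZMod m) = (b + t) + 1 := by push_cast; ring
    rw [this]
    exact hadj _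

lemma zseg_nodup (f : ZMod m → V) (hinj : Function.Injective f) (b : ZMod m) {k : ℕ}
    (hk : k ≤ m) : (zseg f b k).Nodup := by
  refine (List.nodup_range (n := k)).map_on ?_
  intro t1 h1 t2 h2 heq
  rw [List.mem_range] at h1 h2
  have h3 : (t1 : ZMod m) = (t2 : ZMod m) := add_left_cancel (hinj heq)
  have := congrArg ZMod.val h3
  rwa [ZMod.val_natCast, ZMod.val_natCast, Nat.mod_eq_of_lt (by omega),
    Nat.mod_eq_of_lt (by omega)] at this

lemma zseg_append (f : ZMod m → V) (b : ZMod m) (k1 k2 : ℕ) :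
    zseg f b k1 ++ zseg f (b + k1) k2 = zseg f b (k1 + k2) := by
  rw [zseg, zseg, zseg, List.range_add, List.map_append, List.map_map]
  congr 1
  apply List.map_congr_left
  intro t _
  simp only [Function.comp_apply]
  congr 1
  push_cast
  ring

lemma zseg_subset (f : ZMod m → V) (b : ZMod m) (k : ℕ) {u : V} (hu : u ∈ zseg f b k) :
    u ∈ Set.range f := by
  rw [zseg, List.mem_map] at hu
  obtain ⟨t, -, rfl⟩ := hu
  exact ⟨_, rfl⟩

lemma mem_zseg_full (f : ZMod m → V) (b : ZMod m) (i : ZMod m) : f i ∈ zseg f b m := by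
  rw [zseg, List.mem_map]
  refine ⟨(i - b).val, List.mem_range.mpr (ZMod.val_lt _), ?_⟩
  congr 1
  rw [ZMod.natCast_rightInverse (i - b)]
  ring

end zseg

-- core list cycle machinery


lemma exists_walk_of_chain (a : V) (l : List V) (hc : List.Chain G.Adj a l) :
    ∃ w : G.Walk a (l.getLastD a), w.support = a :: l := by
  induction l generalizing a with
  | nil => exact ⟨(Walk.nil : G.Walk a a).copy rfl (by simp), by simp⟩
  | cons b rest ih =>
    rw [List.getLastD_cons]
    obtain ⟨w, hw⟩ := ih b (List.chain_of_chain_cons hc)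
    exact ⟨.cons (List.rel_of_chain_cons hc) w, by simp [hw]⟩

lemma closing_edge_not_mem {a b w : V} (p : G.Walk a b) (hnd : p.support.Nodup)
    (hw : w ∈ p.support.tail.tail) : s(w, a) ∉ p.edges := by
  cases p with
  | nil => simp
  | cons h q =>
    intro hmem
    simp only [Walk.edges_cons, List.mem_cons] at hmem
    simp only [Walk.support_cons, List.tail_cons] at hw hnd
    rcases hmem with heq | hmem
    · rw [Sym2.eq_iff] at heq
      rcases heq with ⟨rfl, rfl⟩ | ⟨rfl, -⟩
      · exact (List.nodup_cons.mp hnd).1 (List.mem_of_mem_tail hw)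
      · have h2 := (List.nodup_cons.mp hnd).2
        have h1 : q.support = w :: q.support.tail := by
          conv_lhs => rw [← List.cons_head_tail (l := q.support) (by simp)]
          rw [Walk.head_support]
        rw [h1, List.nodup_cons] at h2
        exact h2.1 hw
    · have : a ∈ q.support := Walk.snd_mem_support_of_mem_edges q hmem
      exact (List.nodup_cons.mp hnd).1 this

lemma exists_cycle_of_list (l : List V) (h3 : 3 ≤ l.length) (hnd : l.Nodup)
    (hchain : l.Chain' G.Adj)
    (hcl : G.Adj (l.getLast (by rintro rfl; simp at h3)) (l.head (by rintro rfl; simp at h3))) :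
    ∃ (w : V) (c : G.Walk w w), c.IsCycle ∧ ∀ u, u ∈ c.support ↔ u ∈ l := by
  match l, h3 with
  | a :: rest, h3 =>
    have hrne : rest ≠ [] := by
      rintro rfl; simp at h3
    have hch : List.Chain G.Adj a rest := hchain
    obtain ⟨p, hp⟩ := exists_walk_of_chain a rest hch
    have hgl : rest.getLastD a = (a :: rest).getLast (by simp) := by
      rw [List.getLast_cons hrne, List.getLastD_eq_getLast?, List.getLast?_eq_getLast hrne]
      rfl
    have hnd' : p.support.Nodup := by rw [hp]; exact hnd
    have hcl' : G.Adj (rest.getLastD a) a := by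
      rw [hgl]; simpa using hcl
    have hmem : rest.getLastD a ∈ p.support.tail.tail := by
      rw [hp]
      simp only [List.tail_cons]
      match rest, hrne with
      | b :: rest', _ =>
        have hr' : rest' ≠ [] := by rintro rfl; simp at h3
        rw [List.getLastD_cons, List.tail_cons, List.getLastD_eq_getLast?,
          List.getLast?_eq_getLast hr']
        exact List.getLast_mem hr'
    have hedge : s(rest.getLastD a, a) ∉ p.edges := closing_edge_not_mem p hnd' hmem
    refine ⟨rest.getLastD a, Walk.cons hcl' p, ?_, ?_⟩
    · rw [Walk.cons_isCycle_iff]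
      exact ⟨(Walk.isPath_def p).mpr hnd', hedge⟩
    · intro u
      simp only [Walk.support_cons, List.mem_cons, hp]
      constructor
      · rintro (rfl | h)
        · right
          match rest, hrne with
          | b :: rest', _ => rw [List.getLastD_cons]; exact List.getLastD_mem_cons
        · exact h
      · exact fun h => Or.inr h


section helpers
variable {α : Type*}

lemma head?_append' {l₁ l₂ : List α} {a : α} (h : l₁.head? = some a) :
    (l₁ ++ l₂).head? = some a := by
  cases l₁ with
  | nil => simp at h
  | cons b t => simpa using h

lemma getLast?_append' {l₁ l₂ : List α} {a : α} (h : l₂.getLast? = some a) :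
    (l₁ ++ l₂).getLast? = some a := by
  rw [List.getLast?_append, h]
  rfl

lemma head_of_head? {l : List α} {a : α} (h : l.head? = some a) (hne : l ≠ []) :
    l.head hne = a := by
  cases l with
  | nil => exact absurd rfl hne
  | cons b t => simpa using h

lemma getLast_of_getLast? {l : List α} {a : α} (h : l.getLast? = some a) (hne : l ≠ []) :
    l.getLast hne = a := by
  rw [List.getLast?_eq_getLast hne] at h
  exact Option.some.inj h

end helpers

lemma one_le_val_of_ne {m : ℕ} [NeZero m] {i j : ZMod m} (h : i ≠ j) : 1 ≤ (i - j).val := by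
  have h0 : i - j ≠ 0 := sub_ne_zero_of_ne h
  rcases Nat.eq_zero_or_pos (i - j).val with h1 | h1
  · exact absurd ((ZMod.val_eq_zero (i - j)).mp h1) h0
  · exact h1

section patterns
variable {m : ℕ} [NeZero m] (hm3 : 3 ≤ m) {x0 z0 : V}
  {f : ZMod m → V} (hinj : Function.Injective f)
  (hadj : ∀ i, G.Adj (f i) (f (i + 1)))
  {Q : List V} (hQnd : Q.Nodup) (hQch : Q.Chain' G.Adj) (hQne : Q ≠ [])
  (hQh : Q.head hQne = x0) (hQl : Q.getLast hQne = z0)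
  (hQdisj : ∀ u ∈ Q, u ∉ Set.range f)

include hm3 hinj hQnd hQch hQh hQl hQdisj in
lemma pattern_core (M : List V) {c : ZMod m} (hperm : M.Perm (zseg f c m))
    (hMch : M.Chain' G.Adj) {e1 e2 : ZMod m}
    (hMh : M.head? = some (f e1)) (hMl : M.getLast? = some (f e2))
    (hj : G.Adj z0 (f e1)) (hcl : G.Adj (f e2) x0) :
    ∃ (w : V) (c' : G.Walk w w), c'.IsCycle ∧
      ∀ u, u ∈ c'.support ↔ (u ∈ Set.range f ∨ u ∈ Q) := by
  have hMne : M ≠ [] := by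
    intro h; rw [h] at hperm
    have := hperm.length_eq; simp at this; omega
  have hmemM : ∀ u, u ∈ M ↔ u ∈ Set.range f := by
    intro u
    rw [hperm.mem_iff]
    exact ⟨fun h => zseg_subset f c m h, fun h => by obtain ⟨i, rfl⟩ := h; exact mem_zseg_full f c i⟩
  have hMnd : M.Nodup := hperm.nodup_iff.mpr (zseg_nodup f hinj c le_rfl)
  have hlne : Q ++ M ≠ [] := by simp [hQne]
  have h3 : 3 ≤ (Q ++ M).length := by
    rw [List.length_append, hperm.length_eq, zseg_length]
    omega
  have hnd : (Q ++ M).Nodup := by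
    rw [List.nodup_append]
    exact ⟨hQnd, hMnd, fun a ha b hb hab => hQdisj a ha (by rw [hab]; exact (hmemM b).mp hb)⟩
  have hch : (Q ++ M).Chain' G.Adj := by
    simp only [List.Chain']; rw [List.isChain_append]
    refine ⟨hQch, hMch, ?_⟩
    intro p hp q hq
    rw [List.getLast?_eq_getLast hQne] at hp
    rw [hMh] at hq
    cases hp; cases hq
    rw [hQl]
    exact hj
  have hhead : (Q ++ M).head hlne = x0 := by
    apply head_of_head?
    apply head?_append'
    rw [List.head?_eq_head hQne, hQh]
  have hlast : (Q ++ M).getLast hlne = f e2 :=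
    getLast_of_getLast? (getLast?_append' hMl) hlne
  have hcl' : G.Adj ((Q ++ M).getLast (by rintro h; rw [h] at h3; simp at h3))
      ((Q ++ M).head (by rintro h; rw [h] at h3; simp at h3)) := by
    rw [show (Q ++ M).getLast _ = f e2 from hlast, show (Q ++ M).head _ = x0 from hhead]
    exact hcl
  obtain ⟨w, c', hcyc, hsupp⟩ := exists_cycle_of_list (Q ++ M) h3 hnd hch hcl'
  refine ⟨w, c', hcyc, fun u => ?_⟩
  rw [hsupp u, List.mem_append, hmemM]
  tauto

include hm3 hinj hadj hQnd hQch hQh hQl hQdisj in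
lemma pattern_P1 (U : ZMod m) (e1 : G.Adj x0 (f U)) (e2 : G.Adj z0 (f (U + 1))) :
    ∃ (w : V) (c' : G.Walk w w), c'.IsCycle ∧
      ∀ u, u ∈ c'.support ↔ (u ∈ Set.range f ∨ u ∈ Q) := by
  have hm1 : 1 ≤ m := by omega
  refine pattern_core hm3 hinj hQnd hQch hQne hQh hQl hQdisj (zseg f (U+1) m)
    (List.Perm.refl _) (zseg_chain f hadj _ _) (zseg_head? f _ hm1) (zseg_getLast? f _ hm1) e2 ?_
  have h : (U + 1 + (m : ZMod m) - 1 : ZMod m) = U := by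
    rw [ZMod.natCast_self]; ring
  rw [h]
  exact e1.symm

include hm3 hinj hadj hQnd hQch hQh hQl hQdisj in
lemma pattern_P2 (U W : ZMod m) (hne : W ≠ U)
    (e1 : G.Adj x0 (f U)) (e2 : G.Adj z0 (f W)) (e3 : G.Adj (f (U + 1)) (f (W + 1))) :
    ∃ (w : V) (c' : G.Walk w w), c'.IsCycle ∧
      ∀ u, u ∈ c'.support ↔ (u ∈ Set.range f ∨ u ∈ Q) := by
  set b : ℕ := (W - U).val with hbdef
  have hb1 : 1 ≤ b := one_le_val_of_ne hne
  have hbm : b < m := ZMod.val_lt _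
  have hcb : ((b : ℕ) : ZMod m) = W - U := ZMod.natCast_rightInverse _
  have hcmb : ((m - b : ℕ) : ZMod m) = -(b : ZMod m) := by
    rw [Nat.cast_sub hbm.le, ZMod.natCast_self]; ring
  set A1 := zseg f (U + 1) b with hA1
  set A2 := zseg f (U + 1 + (b : ZMod m)) (m - b) with hA2
  have hperm : (A1.reverse ++ A2).Perm (zseg f (U + 1) m) := by
    calc A1.reverse ++ A2 ~ A1 ++ A2 := (A1.reverse_perm).append_right A2
    _ = zseg f (U + 1) m := by rw [hA1, hA2, zseg_append]; congr 1; omega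
  have hch : (A1.reverse ++ A2).Chain' G.Adj := by
    simp only [List.Chain']; rw [List.isChain_append]
    refine ⟨?_, zseg_chain f hadj _ _, ?_⟩
    · rw [List.isChain_reverse]
      exact List.IsChain.imp (by intro a b h; exact h.symm) (zseg_chain f hadj _ _)
    · intro p hp q hq
      rw [List.getLast?_reverse, zseg_head? f _ hb1] at hp
      rw [hA2, zseg_head? f _ (by omega)] at hq
      cases hp; cases hq
      have h : U + 1 + ((b : ℕ) : ZMod m) = W + 1 := by rw [hcb]; ring
      rw [h]
      exact e3
  have hMh : (A1.reverse ++ A2).head? = some (f W) := by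
    apply head?_append'
    rw [List.head?_reverse, hA1, zseg_getLast? f _ hb1]
    congr 2
    rw [hcb]; ring
  have hMl : (A1.reverse ++ A2).getLast? = some (f U) := by
    apply getLast?_append'
    rw [hA2, zseg_getLast? f _ (by omega : 1 ≤ m - b)]
    congr 2
    rw [hcmb, hcb]; ring
  exact pattern_core hm3 hinj hQnd hQch hQne hQh hQl hQdisj _ hperm hch hMh hMl e2 e1.symm

include hm3 hinj hadj hQnd hQch hQh hQl hQdisj in
lemma pattern_E3 (U W Vv : ZMod m) (hWU : W ≠ U) (hor : (W - U).val < (Vv - U).val)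
    (e1 : G.Adj x0 (f U)) (e2 : G.Adj z0 (f Vv))
    (e3 : G.Adj (f (U + 1)) (f (W + 1))) (e4 : G.Adj (f W) (f (Vv + 1))) :
    ∃ (w : V) (c' : G.Walk w w), c'.IsCycle ∧
      ∀ u, u ∈ c'.support ↔ (u ∈ Set.range f ∨ u ∈ Q) := by
  set a : ℕ := (W - U).val with hadef
  set b : ℕ := (Vv - U).val with hbdef
  have ha1 : 1 ≤ a := one_le_val_of_ne hWU
  have hbm : b < m := ZMod.val_lt _
  have hca : ((a : ℕ) : ZMod m) = W - U := ZMod.natCast_rightInverse _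
  have hcb : ((b : ℕ) : ZMod m) = Vv - U := ZMod.natCast_rightInverse _
  have hcba : ((b - a : ℕ) : ZMod m) = Vv - W := by
    rw [Nat.cast_sub hor.le, hca, hcb]; ring
  have hcmb : ((m - b : ℕ) : ZMod m) = -((b : ℕ) : ZMod m) := by
    rw [Nat.cast_sub hbm.le, ZMod.natCast_self]; ring
  set A1 := zseg f (U + 1) a with hA1
  set A2 := zseg f (U + 1 + (a : ZMod m)) (b - a) with hA2
  set A3 := zseg f (U + 1 + (b : ZMod m)) (m - b) with hA3
  have hperm : (A2.reverse ++ (A1 ++ A3)).Perm (zseg f (U + 1) m) := by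
    calc A2.reverse ++ (A1 ++ A3) ~ A2 ++ (A1 ++ A3) := (A2.reverse_perm).append_right _
    _ = (A2 ++ A1) ++ A3 := by rw [List.append_assoc]
    _ ~ (A1 ++ A2) ++ A3 := (List.perm_append_comm).append_right A3
    _ = zseg f (U + 1) m := by
        rw [hA1, hA2, hA3, zseg_append]
        rw [show a + (b - a) = b by omega, zseg_append]
        congr 1
        omega
  have hch : (A2.reverse ++ (A1 ++ A3)).Chain' G.Adj := by
    simp only [List.Chain']; rw [List.isChain_append]
    refine ⟨?_, ?_, ?_⟩
    · rw [List.isChain_reverse]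
      exact List.IsChain.imp (by intro a b h; exact h.symm) (zseg_chain f hadj _ _)
    · rw [List.isChain_append]
      refine ⟨zseg_chain f hadj _ _, zseg_chain f hadj _ _, ?_⟩
      intro p hp q hq
      rw [hA1, zseg_getLast? f _ ha1] at hp
      rw [hA3, zseg_head? f _ (by omega)] at hq
      cases hp; cases hq
      have h1 : U + 1 + ((a : ℕ) : ZMod m) - 1 = W := by rw [hca]; ring
      have h2 : U + 1 + ((b : ℕ) : ZMod m) = Vv + 1 := by rw [hcb]; ring
      rw [h1, h2]
      exact e4
    · intro p hp q hq
      rw [List.getLast?_reverse, hA2, zseg_head? f _ (by omega)] at hp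
      rw [head?_append' (by rw [hA1, zseg_head? f _ ha1] : A1.head? = some (f (U + 1)))] at hq
      cases hp; cases hq
      have h1 : U + 1 + ((a : ℕ) : ZMod m) = W + 1 := by rw [hca]; ring
      rw [h1]
      exact e3.symm
  have hMh : (A2.reverse ++ (A1 ++ A3)).head? = some (f Vv) := by
    apply head?_append'
    rw [List.head?_reverse, hA2, zseg_getLast? f _ (by omega : 1 ≤ b - a)]
    congr 2
    rw [hcba, hca]; ring
  have hMl : (A2.reverse ++ (A1 ++ A3)).getLast? = some (f U) := by
    apply getLast?_append'
    apply getLast?_append'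
    rw [hA3, zseg_getLast? f _ (by omega : 1 ≤ m - b)]
    congr 2
    rw [hcmb]; ring
  exact pattern_core hm3 hinj hQnd hQch hQne hQh hQl hQdisj _ hperm hch hMh hMl e2 e1.symm

include hm3 hinj hadj hQnd hQch hQh hQl hQdisj in
lemma pattern_E3' (U W Vv : ZMod m) (hVU : Vv ≠ U) (hor : (Vv - U).val < (W - U).val)
    (e1 : G.Adj x0 (f W)) (e2 : G.Adj z0 (f Vv))
    (e3 : G.Adj (f (U + 1)) (f (W + 1))) (e4 : G.Adj (f U) (f (Vv + 1))) :
    ∃ (w : V) (c' : G.Walk w w), c'.IsCycle ∧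
      ∀ u, u ∈ c'.support ↔ (u ∈ Set.range f ∨ u ∈ Q) := by
  set a : ℕ := (W - U).val with hadef
  set b : ℕ := (Vv - U).val with hbdef
  have hb1 : 1 ≤ b := one_le_val_of_ne hVU
  have ham : a < m := ZMod.val_lt _
  have hca : ((a : ℕ) : ZMod m) = W - U := ZMod.natCast_rightInverse _
  have hcb : ((b : ℕ) : ZMod m) = Vv - U := ZMod.natCast_rightInverse _
  have hcab : ((a - b : ℕ) : ZMod m) = W - Vv := by
    rw [Nat.cast_sub hor.le, hca, hcb]; ring
  have hcma : ((m - a : ℕ) : ZMod m) = -((a : ℕ) : ZMod m) := by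
    rw [Nat.cast_sub ham.le, ZMod.natCast_self]; ring
  set B1 := zseg f (U + 1) b with hB1
  set B2 := zseg f (U + 1 + (b : ZMod m)) (a - b) with hB2
  set B3 := zseg f (U + 1 + (a : ZMod m)) (m - a) with hB3
  have hperm : (B1.reverse ++ (B3 ++ B2)).Perm (zseg f (U + 1) m) := by
    calc B1.reverse ++ (B3 ++ B2) ~ B1 ++ (B3 ++ B2) := (B1.reverse_perm).append_right _
    _ ~ B1 ++ (B2 ++ B3) := List.Perm.append_left B1 List.perm_append_comm
    _ = (B1 ++ B2) ++ B3 := by rw [List.append_assoc]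
    _ = zseg f (U + 1) m := by
        rw [hB1, hB2, hB3, zseg_append]
        rw [show b + (a - b) = a by omega, zseg_append]
        congr 1
        omega
  have hch : (B1.reverse ++ (B3 ++ B2)).Chain' G.Adj := by
    simp only [List.Chain']; rw [List.isChain_append]
    refine ⟨?_, ?_, ?_⟩
    · rw [List.isChain_reverse]
      exact List.IsChain.imp (by intro a b h; exact h.symm) (zseg_chain f hadj _ _)
    · rw [List.isChain_append]
      refine ⟨zseg_chain f hadj _ _, zseg_chain f hadj _ _, ?_⟩
      intro p hp q hq
      rw [hB3, zseg_getLast? f _ (by omega : 1 ≤ m - a)] at hp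
      rw [hB2, zseg_head? f _ (by omega)] at hq
      cases hp; cases hq
      have h1 : U + 1 + ((a : ℕ) : ZMod m) + ((m - a : ℕ) : ZMod m) - 1 = U := by
        rw [hcma]; ring
      have h2 : U + 1 + ((b : ℕ) : ZMod m) = Vv + 1 := by rw [hcb]; ring
      rw [h1, h2]
      exact e4
    · intro p hp q hq
      rw [List.getLast?_reverse, hB1, zseg_head? f _ hb1] at hp
      rw [head?_append' (by rw [hB3, zseg_head? f _ (by omega : 1 ≤ m - a)] :
        B3.head? = some (f (U + 1 + ((a : ℕ) : ZMod m))))] at hq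
      cases hp; cases hq
      have h1 : U + 1 + ((a : ℕ) : ZMod m) = W + 1 := by rw [hca]; ring
      rw [h1]
      exact e3
  have hMh : (B1.reverse ++ (B3 ++ B2)).head? = some (f Vv) := by
    apply head?_append'
    rw [List.head?_reverse, hB1, zseg_getLast? f _ hb1]
    congr 2
    rw [hcb]; ring
  have hMl : (B1.reverse ++ (B3 ++ B2)).getLast? = some (f W) := by
    apply getLast?_append'
    apply getLast?_append'
    rw [hB2, zseg_getLast? f _ (by omega : 1 ≤ a - b)]
    congr 2
    rw [hcab, hcb]; ring
  exact pattern_core hm3 hinj hQnd hQch hQne hQh hQl hQdisj _ hperm hch hMh hMl e2 e1.symm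

end patterns



lemma exists_cyclic_enum {v : V} (C : G.Walk v v) (hC : C.IsCycle) :
    ∃ (m : ℕ) (_ : 3 ≤ m) (f : ZMod m → V), Function.Injective f ∧
      (∀ (_ : NeZero m) i, G.Adj (f i) (f (i + 1))) ∧
      (∀ u, u ∈ Set.range f ↔ u ∈ C.support) := by
  classical
  obtain ⟨L, hsup⟩ : ∃ L, C.support = v :: L := ⟨C.support.tail, C.support_eq_cons⟩
  have hLnd : L.Nodup := by
    have := hC.2
    rw [hsup] at this
    simpa using this
  have hlen : L.length = C.length := by
    have := C.length_support
    rw [hsup] at this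
    simp at this
    omega
  have hm3 : 3 ≤ L.length := by rw [hlen]; exact hC.three_le_length
  have hLne : L ≠ [] := by intro h; rw [h] at hm3; simp at hm3
  haveI : NeZero L.length := ⟨by omega⟩
  have hchain : List.Chain G.Adj v L := by
    have := C.isChain_adj_support
    rwa [hsup] at this
  have hchain' : L.Chain' G.Adj := by
    have h2 : List.Chain' G.Adj (v :: L) := hchain
    exact h2.tail
  have hlast : L.getLast hLne = v := by
    have h2 : C.support.getLast? = some v := by
      rw [List.getLast?_eq_getLast C.support_ne_nil, C.getLast_support]
    rw [hsup, List.getLast?_eq_getLast (l := v :: L) (by simp), List.getLast_cons hLne] at h2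
    exact Option.some.inj h2
  refine ⟨L.length, hm3, fun i => L.get ⟨i.val, ZMod.val_lt i⟩, ?_, ?_, ?_⟩
  · intro i j hij
    have hget := List.nodup_iff_injective_get.mp hLnd hij
    have : i.val = j.val := congrArg Fin.val hget
    exact ZMod.val_injective _ this
  · intro _ i
    have hv1 : ∀ t : ℕ, t < L.length → ((t : ZMod L.length)).val = t :=
      fun t ht => ZMod.val_natCast_of_lt ht
    by_cases h : i.val + 1 < L.length
    · have h1 : (i + 1).val = i.val + 1 := by
        have : i + 1 = ((i.val + 1 : ℕ) : ZMod L.length) := by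
          push_cast [ZMod.natCast_rightInverse i]
          ring
        rw [this, hv1 _ h]
      show G.Adj (L.get ⟨i.val, ZMod.val_lt i⟩) (L.get ⟨(i + 1).val, ZMod.val_lt _⟩)
      have hstep := List.isChain_iff_getElem.mp hchain' i.val (by omega)
      have hfin : (⟨(i + 1).val, ZMod.val_lt _⟩ : Fin L.length) = ⟨i.val + 1, by omega⟩ :=
        Fin.ext h1
      rw [hfin]
      exact hstep
    · -- wraparound
      have hival : i.val = L.length - 1 := by have := ZMod.val_lt i; omega
      have h1 : (i + 1).val = 0 := by
        have : i + 1 = ((i.val + 1 : ℕ) : ZMod L.length) := by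
          push_cast [ZMod.natCast_rightInverse i]
          ring
        rw [this, ZMod.val_natCast]
        have : i.val + 1 = L.length := by omega
        rw [this, Nat.mod_self]
      show G.Adj (L.get ⟨i.val, ZMod.val_lt i⟩) (L.get ⟨(i + 1).val, ZMod.val_lt _⟩)
      have hfin1 : (⟨i.val, ZMod.val_lt i⟩ : Fin L.length) = ⟨L.length - 1, by omega⟩ :=
        Fin.ext hival
      have hfin2 : (⟨(i + 1).val, ZMod.val_lt _⟩ : Fin L.length) = ⟨0, by omega⟩ :=
        Fin.ext h1
      rw [hfin1, hfin2]
      have hfi : L.get ⟨L.length - 1, by omega⟩ = v := by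
        simp only [List.get_eq_getElem]
        rw [← List.getLast_eq_getElem hLne]
        exact hlast
      have hfi1 : L.get ⟨0, by omega⟩ = L.head hLne := by
        have := List.head_eq_getElem_zero hLne
        simp only [List.get_eq_getElem]
        rw [this]
      rw [hfi, hfi1]
      rw [← List.cons_head_tail hLne] at hchain
      exact List.rel_of_chain_cons hchain
  · intro u
    constructor
    · rintro ⟨i, rfl⟩
      rw [hsup]
      exact List.mem_cons_of_mem _ (L.get_mem _)
    · intro hu
      rw [hsup, List.mem_cons] at hu
      have hmem : u ∈ L := by
        rcases hu with rfl | hu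
        · rw [← hlast]; exact L.getLast_mem hLne
        · exact hu
      obtain ⟨n, hn⟩ := List.mem_iff_get.mp hmem
      refine ⟨(n.1 : ZMod L.length), ?_⟩
      rw [← hn]
      show L.get ⟨((n.1 : ℕ) : ZMod L.length).val, ZMod.val_lt _⟩ = L.get n
      congr 1
      exact Fin.ext (by simpa using ZMod.val_natCast_of_lt n.2)



variable {G : SimpleGraph V}

section tough
variable [Fintype V]

/-- an isolated-in-the-complement vertex gives its own component -/
lemma comp_eq_iff {S : Finset V} {a b : V} (ha : a ∈ ((↑S : Set V)ᶜ)) (hb : b ∈ ((↑S : Set V)ᶜ))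
    (hiso : ∀ u, G.Adj a u → u ∈ S) :
    ((G.induce ((↑S : Set V)ᶜ)).connectedComponentMk ⟨a, ha⟩ =
      (G.induce ((↑S : Set V)ᶜ)).connectedComponentMk ⟨b, hb⟩) → a = b := by
  intro h
  have hr := (SimpleGraph.ConnectedComponent.eq).mp h
  obtain ⟨w⟩ := hr
  cases w with
  | nil => rfl
  | cons hadj w' =>
    exfalso
    rename_i c
    have : G.Adj a c.1 := hadj
    exact c.2 (hiso c.1 this)

lemma indep_bound (htough : IsTough 15 G) (hn : 16 ≤ Fintype.card V)
    (I : Finset V) (hind : ∀ a ∈ I, ∀ b ∈ I, a ≠ b → ¬ G.Adj a b) :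
    (I.card : ℝ) ≤ (Fintype.card V : ℝ) / 16 := by
  classical
  by_cases hI : I.card ≤ 1
  · have : (I.card : ℝ) ≤ 1 := by exact_mod_cast hI
    have h16 : (16 : ℝ) ≤ (Fintype.card V : ℝ) := by exact_mod_cast hn
    have : (1 : ℝ) ≤ (Fintype.card V : ℝ) / 16 := by linarith
    linarith
  · push_neg at hI
    set S : Finset V := I.biUnion (fun a => G.neighborFinset a) with hS
    have hSI : ∀ a ∈ I, a ∉ S := by
      intro a ha hmem
      rw [hS, Finset.mem_biUnion] at hmem
      obtain ⟨b, hb, hab⟩ := hmem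
      rw [mem_neighborFinset] at hab
      by_cases h : b = a
      · subst h; exact G.irrefl hab
      · exact hind b hb a ha h hab
    have hiso : ∀ a ∈ I, ∀ u, G.Adj a u → u ∈ S := by
      intro a ha u hu
      rw [hS, Finset.mem_biUnion]
      exact ⟨a, ha, (mem_neighborFinset G a u).mpr hu⟩
    -- injective map from I into components
    have hcompl : ∀ a ∈ I, (a : V) ∈ ((↑S : Set V)ᶜ) := by
      intro a ha
      simpa using hSI a ha
    let φ : {a // a ∈ I} → (G.induce ((↑S : Set V)ᶜ)).ConnectedComponent :=
      fun a => (G.induce ((↑S : Set V)ᶜ)).connectedComponentMk ⟨a.1, hcompl a.1 a.2⟩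
    have hφ : Function.Injective φ := by
      intro a b hab
      exact Subtype.ext (comp_eq_iff (hcompl a.1 a.2) (hcompl b.1 b.2)
        (fun u hu => hiso a.1 a.2 u hu) hab)
    have hcard : I.card ≤ numComponents G S := by
      haveI : Finite ((G.induce ((↑S : Set V)ᶜ)).ConnectedComponent) := by
        haveI : Fintype ((↑S : Set V)ᶜ : Set V) := by infer_instance
        infer_instance
      have h1 : Nat.card {a // a ∈ I} ≤ numComponents G S :=
        Nat.card_le_card_of_injective φ hφ
      rwa [Nat.card_eq_fintype_card, Fintype.card_coe] at h1
    have h2 : 2 ≤ numComponents G S := le_trans hI hcard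
    have htS := htough S h2
    have hSle : (S.card : ℝ) ≤ (Fintype.card V : ℝ) - I.card := by
      have hdisj : Disjoint S I := by
        rw [Finset.disjoint_right]
        exact fun a ha => hSI a ha
      have hle : S.card + I.card ≤ Fintype.card V := by
        rw [← Finset.card_union_of_disjoint hdisj]
        exact Finset.card_le_univ _
      have : (S.card : ℝ) + I.card ≤ (Fintype.card V : ℝ) := by exact_mod_cast hle
      linarith
    have hchain : (15 : ℝ) * I.card ≤ (Fintype.card V : ℝ) - I.card := by
      calc (15 : ℝ) * I.card ≤ 15 * numComponents G S := by
            have : (I.card : ℝ) ≤ numComponents G S := by exact_mod_cast hcard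
            linarith
      _ ≤ S.card := htS
      _ ≤ (Fintype.card V : ℝ) - I.card := hSle
    linarith
end tough

section tough2
variable [Fintype V]

lemma card_ge_32 (htough : IsTough 15 G) {a b : V} (hab : a ≠ b) (hnadj : ¬ G.Adj a b) :
    32 ≤ Fintype.card V := by
  classical
  set S : Finset V := G.neighborFinset a with hS
  have haS : a ∉ S := by simp [hS]
  have hbS : b ∉ S := by simp [hS, hnadj]
  have hiso : ∀ u, G.Adj a u → u ∈ S := by
    intro u hu; simp [hS, hu]
  have haC : (a : V) ∈ ((↑S : Set V)ᶜ) := by simpa using haS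
  have hbC : (b : V) ∈ ((↑S : Set V)ᶜ) := by simpa using hbS
  have hne : (G.induce ((↑S : Set V)ᶜ)).connectedComponentMk ⟨a, haC⟩ ≠
      (G.induce ((↑S : Set V)ᶜ)).connectedComponentMk ⟨b, hbC⟩ := by
    intro h
    exact hab (comp_eq_iff haC hbC hiso h)
  haveI : Finite ((G.induce ((↑S : Set V)ᶜ)).ConnectedComponent) := by
    haveI : Fintype ((↑S : Set V)ᶜ : Set V) := by infer_instance
    infer_instance
  have h2 : 2 ≤ numComponents G S := by
    rw [numComponents]
    haveI : Nontrivial ((G.induce ((↑S : Set V)ᶜ)).ConnectedComponent) := ⟨_, _, hne⟩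
    exact Finite.one_lt_card_iff_nontrivial.mpr this
  have htS := htough S h2
  have h30 : (30 : ℝ) ≤ S.card := by
    have h2' : (2 : ℝ) ≤ (numComponents G S : ℝ) := by exact_mod_cast h2
    nlinarith
  have hle : S.card + 2 ≤ Fintype.card V := by
    have : (insert a (insert b S)).card ≤ Fintype.card V := Finset.card_le_univ _
    rw [Finset.card_insert_of_notMem (by simp [haS, hab]),
      Finset.card_insert_of_notMem hbS] at this
    omega
  have : (30 : ℕ) ≤ S.card := by exact_mod_cast h30
  omega

end tough2

/-- no induced P2 ∪ P3 -/
lemma no_p2p3 (hfree : P2P3Free G) {p q a b c : V}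
    (hpq : p ≠ q) (hpa : p ≠ a) (hpb : p ≠ b) (hpc : p ≠ c)
    (hqa : q ≠ a) (hqb : q ≠ b) (hqc : q ≠ c)
    (hab : a ≠ b) (hac : a ≠ c) (hbc : b ≠ c)
    (epq : G.Adj p q) (eab : G.Adj a b) (ebc : G.Adj b c)
    (nac : ¬ G.Adj a c) (npa : ¬ G.Adj p a) (npb : ¬ G.Adj p b) (npc : ¬ G.Adj p c)
    (nqa : ¬ G.Adj q a) (nqb : ¬ G.Adj q b) (nqc : ¬ G.Adj q c) : False := by
  apply hfree
  refine ⟨⟨![p, q, a, b, c], ?_⟩, ?_⟩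
  · intro i j hij
    fin_cases i <;> fin_cases j <;> simp_all
  · intro i j
    have hsymm : ∀ u w : V, G.Adj u w ↔ G.Adj w u := fun u w => ⟨fun h => h.symm, fun h => h.symm⟩
    fin_cases i <;> fin_cases j <;>
      simp [P2P3, SimpleGraph.fromRel_adj, Matrix.cons_val_zero, Matrix.cons_val_one] <;>
      first
        | exact epq | exact epq.symm | exact eab | exact eab.symm
        | exact ebc | exact ebc.symm
        | (intro h; first
            | exact G.irrefl h
            | exact nac h | exact nac h.symm | exact npa h | exact npa h.symm
            | exact npb h | exact npb h.symm | exact npc h | exact npc h.symm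
            | exact nqa h | exact nqa h.symm | exact nqb h | exact nqb h.symm
            | exact nqc h | exact nqc h.symm | exact epq.ne rfl)
        | skip

end Aux

theorem stmt9 [Fintype V] (G : SimpleGraph V)
    (htough : IsTough 15 G) (hfree : P2P3Free G)
    (v : V) (C : G.Walk v v) (hC : C.IsCycle) (hnonham : ∃ w, w ∉ C.support)
    (x z : V) (P : G.Walk x z) (hP : P.IsPath)
    (hdisj : ∀ u ∈ P.support, u ∉ C.support)
    (hdegx : 4.5 * (Fintype.card V : ℝ) / 16 <
      ({u | u ∈ C.support ∧ G.Adj x u}.ncard : ℝ))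
    (hdegz : 4.5 * (Fintype.card V : ℝ) / 16 <
      ({u | u ∈ C.support ∧ G.Adj z u}.ncard : ℝ)) :
    ∃ (w : V) (C' : G.Walk w w), C'.IsCycle ∧
      {u | u ∈ C'.support} = {u | u ∈ C.support} ∪ {u | u ∈ P.support} := by
  classical
  by_contra hcon
  have hx_nc : x ∉ C.support := hdisj x P.start_mem_support
  have hz_nc : z ∉ C.support := hdisj z P.end_mem_support
  obtain ⟨m, hm3, f, hinj, hadjN, hrange⟩ := exists_cyclic_enum C hC
  haveI hNZ : NeZero m := ⟨by omega⟩
  have hadj : ∀ i, G.Adj (f i) (f (i + 1)) := hadjN hNZ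
  have hone : (1 : ZMod m) ≠ 0 := by
    intro h
    have h2 := congrArg ZMod.val h
    rw [show (1 : ZMod m) = ((1 : ℕ) : ZMod m) by push_cast; ring, ZMod.val_natCast,
      Nat.mod_eq_of_lt (by omega)] at h2
    simp at h2
  have hsucc_ne : ∀ i : ZMod m, i ≠ i + 1 := by
    intro i h
    apply hone
    have : i + 0 = i + 1 := by rw [add_zero]; exact h
    exact (add_left_cancel this).symm
  have hxf : ∀ i, x ≠ f i := by
    intro i h
    exact hx_nc (h ▸ (hrange (f i)).mp ⟨i, rfl⟩)
  have hzf : ∀ i, z ≠ f i := by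
    intro i h
    exact hz_nc (h ▸ (hrange (f i)).mp ⟨i, rfl⟩)
  -- path data
  have hQnd : P.support.Nodup := hP.support_nodup
  have hQch : P.support.Chain' G.Adj := P.isChain_adj_support
  have hQne : P.support ≠ [] := P.support_ne_nil
  have hQh : P.support.head hQne = x := P.head_support
  have hQl : P.support.getLast hQne = z := P.getLast_support
  have hQdisj : ∀ u ∈ P.support, u ∉ Set.range f :=
    fun u hu hru => hdisj u hu ((hrange u).mp hru)
  -- reversed path data
  have hRnd : P.reverse.support.Nodup := hP.reverse.support_nodup
  have hRch : P.reverse.support.Chain' G.Adj := P.reverse.isChain_adj_support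
  have hRne : P.reverse.support ≠ [] := P.reverse.support_ne_nil
  have hRh : P.reverse.support.head hRne = z := P.reverse.head_support
  have hRl : P.reverse.support.getLast hRne = x := P.reverse.getLast_support
  have hRdisj : ∀ u ∈ P.reverse.support, u ∉ Set.range f := by
    intro u hu
    rw [Walk.support_reverse, List.mem_reverse] at hu
    exact hQdisj u hu
  -- how to finish from a constructed cycle
  have finish : ∀ (w : V) (c' : G.Walk w w), c'.IsCycle →
      (∀ u, u ∈ c'.support ↔ (u ∈ Set.range f ∨ u ∈ P.support)) → False := by
    intro w c' hcyc hs
    apply hcon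
    refine ⟨w, c', hcyc, ?_⟩
    ext u
    simp only [Set.mem_setOf_eq, Set.mem_union]
    rw [hs u, hrange u]
  have finishR : ∀ (w : V) (c' : G.Walk w w), c'.IsCycle →
      (∀ u, u ∈ c'.support ↔ (u ∈ Set.range f ∨ u ∈ P.reverse.support)) → False := by
    intro w c' hcyc hs
    apply hcon
    refine ⟨w, c', hcyc, ?_⟩
    ext u
    simp only [Set.mem_setOf_eq, Set.mem_union]
    rw [hs u, hrange u, Walk.support_reverse, List.mem_reverse]
  -- neighbour index sets
  set A : Finset (ZMod m) := Finset.univ.filter (fun i => G.Adj x (f i)) with hA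
  set B : Finset (ZMod m) := Finset.univ.filter (fun i => G.Adj z (f i)) with hB
  have hAmem : ∀ i, i ∈ A ↔ G.Adj x (f i) := by intro i; simp [hA]
  have hBmem : ∀ i, i ∈ B ↔ G.Adj z (f i) := by intro i; simp [hB]
  -- cardinalities
  have himgA : {u | u ∈ C.support ∧ G.Adj x u} = ↑(A.image f) := by
    ext u
    simp only [Set.mem_setOf_eq, Finset.coe_image, Set.mem_image, Finset.mem_coe]
    constructor
    · rintro ⟨hu1, hu2⟩
      obtain ⟨i, rfl⟩ := (hrange u).mpr hu1
      exact ⟨i, (hAmem i).mpr hu2, rfl⟩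
    · rintro ⟨i, hi, rfl⟩
      exact ⟨(hrange (f i)).mp ⟨i, rfl⟩, (hAmem i).mp hi⟩
  have himgB : {u | u ∈ C.support ∧ G.Adj z u} = ↑(B.image f) := by
    ext u
    simp only [Set.mem_setOf_eq, Finset.coe_image, Set.mem_image, Finset.mem_coe]
    constructor
    · rintro ⟨hu1, hu2⟩
      obtain ⟨i, rfl⟩ := (hrange u).mpr hu1
      exact ⟨i, (hBmem i).mpr hu2, rfl⟩
    · rintro ⟨i, hi, rfl⟩
      exact ⟨(hrange (f i)).mp ⟨i, rfl⟩, (hBmem i).mp hi⟩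
  have hAcard : 4.5 * (Fintype.card V : ℝ) / 16 < (A.card : ℝ) := by
    have h1 := hdegx
    rw [himgA, Set.ncard_coe_finset, Finset.card_image_of_injective A hinj] at h1
    exact h1
  have hBcard : 4.5 * (Fintype.card V : ℝ) / 16 < (B.card : ℝ) := by
    have h1 := hdegz
    rw [himgB, Set.ncard_coe_finset, Finset.card_image_of_injective B hinj] at h1
    exact h1
  -- pattern failures
  have hP1 : ∀ i : ZMod m, i ∈ A → (i + 1) ∈ B → False := by
    intro i hiA hiB
    obtain ⟨w, c', hcyc, hs⟩ := pattern_P1 hm3 hinj hadj hQnd hQch hQne hQh hQl hQdisj i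
      ((hAmem i).mp hiA) ((hBmem _).mp hiB)
    exact finish w c' hcyc hs
  have hP1' : ∀ i : ZMod m, i ∈ B → (i + 1) ∈ A → False := by
    intro i hiB hiA
    obtain ⟨w, c', hcyc, hs⟩ := pattern_P1 hm3 hinj hadj hRnd hRch hRne hRh hRl hRdisj i
      ((hBmem i).mp hiB) ((hAmem _).mp hiA)
    exact finishR w c' hcyc hs
  have hP2 : ∀ i j : ZMod m, i ∈ A → j ∈ B → i ≠ j →
      ¬ G.Adj (f (i + 1)) (f (j + 1)) := by
    intro i j hiA hjB hij hadj'
    obtain ⟨w, c', hcyc, hs⟩ := pattern_P2 hm3 hinj hadj hQnd hQch hQne hQh hQl hQdisj i j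
      (fun h => hij h.symm) ((hAmem i).mp hiA) ((hBmem j).mp hjB) hadj'
    exact finish w c' hcyc hs
  have hE3comb : ∀ U W Vv : ZMod m, U ∈ A → W ∈ A → Vv ∈ B → W ≠ U → Vv ≠ U → Vv ≠ W →
      G.Adj (f (U + 1)) (f (W + 1)) → G.Adj (f U) (f (Vv + 1)) → G.Adj (f W) (f (Vv + 1)) →
      False := by
    intro U W Vv hUA hWA hVvB hWU hVvU hVvW e3 e4U e4W
    rcases lt_trichotomy ((W - U).val) ((Vv - U).val) with h | h | h
    · obtain ⟨w, c', hcyc, hs⟩ := pattern_E3 hm3 hinj hadj hQnd hQch hQne hQh hQl hQdisj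
        U W Vv hWU h ((hAmem U).mp hUA) ((hBmem Vv).mp hVvB) e3 e4W
      exact finish w c' hcyc hs
    · exfalso
      apply hVvW
      have h2 : ((W - U).val : ZMod m) = ((Vv - U).val : ZMod m) := by rw [h]
      rw [ZMod.natCast_rightInverse, ZMod.natCast_rightInverse] at h2
      exact (sub_left_inj.mp h2).symm
    · obtain ⟨w, c', hcyc, hs⟩ := pattern_E3' hm3 hinj hadj hQnd hQch hQne hQh hQl hQdisj
        U W Vv hVvU h ((hAmem W).mp hWA) ((hBmem Vv).mp hVvB) e3 e4U
      exact finish w c' hcyc hs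
  -- n ≥ 32
  have hn32 : 32 ≤ Fintype.card V := by
    by_cases hcomp : ∀ a b : V, a ≠ b → G.Adj a b
    · exfalso
      refine hP1 0 ((hAmem 0).mpr (hcomp x (f 0) (hxf 0))) ?_
      rw [zero_add]
      exact (hBmem 1).mpr (hcomp z (f 1) (hzf 1))
    · push_neg at hcomp
      obtain ⟨a, b, hne, hnadj⟩ := hcomp
      exact card_ge_32 htough hne hnadj
  have hn16 : 16 ≤ Fintype.card V := by omega
  have hnR : (32 : ℝ) ≤ (Fintype.card V : ℝ) := by exact_mod_cast hn32
  -- s4 : good sets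
  have hGood : ∀ i ∈ A, (i + 1) ∉ A →
      (B.card : ℝ) - (Fintype.card V : ℝ) / 16 - 1
        ≤ ((B.filter (fun j => G.Adj (f i) (f (j + 1)))).card : ℝ) := by
    intro i hiA hi1A
    set Bad := B.filter (fun j => ¬ G.Adj (f i) (f (j + 1))) with hBad
    set I := (Bad.erase i).image (fun j => f (j + 1)) with hI
    have hindep : ∀ a ∈ I, ∀ b ∈ I, a ≠ b → ¬ G.Adj a b := by
      intro a ha b hb hne hadj'
      rw [hI, Finset.mem_image] at ha hb
      obtain ⟨j1, hj1, rfl⟩ := ha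
      obtain ⟨j2, hj2, rfl⟩ := hb
      have hj1i : j1 ≠ i := Finset.ne_of_mem_erase hj1
      have hj2i : j2 ≠ i := Finset.ne_of_mem_erase hj2
      have hj1' := Finset.mem_of_mem_erase hj1
      have hj2' := Finset.mem_of_mem_erase hj2
      rw [hBad, Finset.mem_filter] at hj1' hj2'
      have hj1B := hj1'.1
      have hj2B := hj2'.1
      have hj1n := hj1'.2
      have hj2n := hj2'.2
      have hs1 : (j1 + 1) ∉ A := fun hmem => hP1' j1 hj1B hmem
      have hs2 : (j2 + 1) ∉ A := fun hmem => hP1' j2 hj2B hmem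
      have hj1ne_i : j1 + 1 ≠ i := by
        intro h
        exact hs1 (h ▸ hiA)
      have hj2ne_i : j2 + 1 ≠ i := by
        intro h
        exact hs2 (h ▸ hiA)
      refine no_p2p3 hfree (p := f (j1 + 1)) (q := f (j2 + 1)) (a := x) (b := f i)
        (c := f (i + 1)) ?_ ?_ ?_ ?_ ?_ ?_ ?_ ?_ ?_ ?_ hadj'
        ((hAmem i).mp hiA) (hadj i) ?_ ?_ ?_ ?_ ?_ ?_ ?_
      · exact hne
      · exact fun h => hxf (j1 + 1) h.symm
      · exact fun h => hj1ne_i (hinj h)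
      · exact fun h => (by intro h2; exact hj1i (add_left_injective 1 h2) : j1 + 1 ≠ i + 1) (hinj h)
      · exact fun h => hxf (j2 + 1) h.symm
      · exact fun h => hj2ne_i (hinj h)
      · exact fun h => (by intro h2; exact hj2i (add_left_injective 1 h2) : j2 + 1 ≠ i + 1) (hinj h)
      · exact hxf i
      · exact hxf (i + 1)
      · exact fun h => hsucc_ne i (hinj h)
      · exact fun h => hi1A ((hAmem (i + 1)).mpr h)
      · exact fun h => (hAmem (j1 + 1)).mpr h.symm |> hs1
      · exact fun h => hj1n h.symm
      · exact fun h => hP2 i j1 hiA hj1B (fun h2 => hj1i h2.symm) h.symm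
      · exact fun h => (hAmem (j2 + 1)).mpr h.symm |> hs2
      · exact fun h => hj2n h.symm
      · exact fun h => hP2 i j2 hiA hj2B (fun h2 => hj2i h2.symm) h.symm
    have hIcard : (I.card : ℝ) ≤ (Fintype.card V : ℝ) / 16 :=
      indep_bound htough hn16 I hindep
    have hIeq : I.card = (Bad.erase i).card := by
      rw [hI]
      apply Finset.card_image_of_injective
      intro a b h
      exact add_left_injective 1 (hinj h)
    have hBadcard : (Bad.card : ℝ) ≤ (Fintype.card V : ℝ) / 16 + 1 := by
      have h1 : Bad.card ≤ (Bad.erase i).card + 1 := by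
        by_cases hiBad : i ∈ Bad
        · rw [Finset.card_erase_of_mem hiBad]
          omega
        · rw [Finset.erase_eq_of_notMem hiBad]
          omega
      have h2 : ((Bad.erase i).card : ℝ) ≤ (Fintype.card V : ℝ) / 16 := by
        rw [← hIeq]; exact_mod_cast hIcard
      have h3 : (Bad.card : ℝ) ≤ ((Bad.erase i).card : ℝ) + 1 := by exact_mod_cast h1
      linarith
    have hsplit : (B.filter (fun j => G.Adj (f i) (f (j + 1)))).card + Bad.card = B.card := by
      rw [hBad]
      exact Finset.card_filter_add_card_filter_not _
    have : ((B.filter (fun j => G.Adj (f i) (f (j + 1)))).card : ℝ) + (Bad.card : ℝ)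
        = (B.card : ℝ) := by exact_mod_cast hsplit
    linarith
  -- s5 : no two consecutive elements of A
  have hAA : ∀ i ∈ A, (i + 1) ∉ A := by
    intro i hiA
    by_contra hi1A
    have hBne : B.Nonempty := by
      rw [← Finset.card_pos]
      by_contra hb
      push_neg at hb
      have hb0 : B.card = 0 := by omega
      rw [hb0] at hBcard
      push_cast at hBcard
      linarith
    have hex_r : ∃ r : ZMod m, r ∉ A := by
      by_contra hall
      push_neg at hall
      obtain ⟨j0, hj0⟩ := hBne
      exact hP1 (j0 - 1) (hall _) (by rw [sub_add_cancel]; exact hj0)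
    obtain ⟨r, hr⟩ := hex_r
    have hri : r ≠ i := fun h => hr (h ▸ hiA)
    have hex : ∃ t : ℕ, 1 ≤ t ∧ i + (t : ZMod m) ∉ A := by
      refine ⟨(r - i).val, one_le_val_of_ne hri, ?_⟩
      rw [ZMod.natCast_rightInverse]
      convert hr using 2
      ring
    set N := Nat.find hex with hN
    have hspec := Nat.find_spec hex
    rw [← hN] at hspec
    have hN1 : 1 ≤ N := hspec.1
    have hN2 : 2 ≤ N := by
      rcases Nat.lt_or_ge N 2 with h | h
      · exfalso
        have : N = 1 := by omega
        rw [this] at hspec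
        apply hspec.2
        rw [Nat.cast_one]
        exact hi1A
      · exact h
    have hw0A : i + ((N - 2 : ℕ) : ZMod m) ∈ A := by
      by_contra hcontra
      have hmin := Nat.find_min hex (show N - 2 < N by omega)
      push_neg at hmin
      rcases Nat.lt_or_ge (N - 2) 1 with hsmall | hbig
      · have h2 : N - 2 = 0 := by omega
        rw [h2] at hcontra
        push_cast at hcontra
        rw [add_zero] at hcontra
        exact hcontra hiA
      · exact hcontra (hmin hbig)
    have hwA : i + ((N - 1 : ℕ) : ZMod m) ∈ A := by
      by_contra hcontra
      have hmin := Nat.find_min hex (show N - 1 < N by omega)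
      push_neg at hmin
      exact hcontra (hmin (by omega))
    have hw01 : (i + ((N - 2 : ℕ) : ZMod m)) + 1 = i + ((N - 1 : ℕ) : ZMod m) := by
      have : ((N - 2 : ℕ) : ZMod m) + 1 = ((N - 1 : ℕ) : ZMod m) := by
        rw [show (N - 1 : ℕ) = (N - 2) + 1 by omega]
        push_cast
        ring
      rw [add_assoc, this]
    have hw1 : (i + ((N - 1 : ℕ) : ZMod m)) + 1 ∉ A := by
      have h2 : ((N - 1 : ℕ) : ZMod m) + 1 = ((N : ℕ) : ZMod m) := by
        rw [show (N : ℕ) = (N - 1) + 1 by omega]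
        push_cast
        ring
      rw [add_assoc, h2]
      exact hspec.2
    have hg := hGood _ hwA hw1
    have hsub : B.filter (fun j => G.Adj (f (i + ((N - 1 : ℕ) : ZMod m))) (f (j + 1)))
        ⊆ {i + ((N - 2 : ℕ) : ZMod m)} := by
      intro j hj
      rw [Finset.mem_filter] at hj
      rw [Finset.mem_singleton]
      by_contra hjne
      refine hP2 _ j hw0A hj.1 (fun h => hjne h.symm) ?_
      rw [hw01]
      exact hj.2
    have hcard1 : (B.filter (fun j => G.Adj (f (i + ((N - 1 : ℕ) : ZMod m))) (f (j + 1)))).card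
        ≤ 1 := by
      have := Finset.card_le_card hsub
      simpa using this
    have hcard1' : ((B.filter (fun j => G.Adj (f (i + ((N - 1 : ℕ) : ZMod m))) (f (j + 1)))).card
        : ℝ) ≤ 1 := by exact_mod_cast hcard1
    linarith
  -- s6 : an edge inside A⁺
  have hXedge : ∃ U W : ZMod m, U ∈ A ∧ W ∈ A ∧ U ≠ W ∧ G.Adj (f (U + 1)) (f (W + 1)) := by
    by_contra hno
    push_neg at hno
    set I := A.image (fun i => f (i + 1)) with hI
    have hindep : ∀ a ∈ I, ∀ b ∈ I, a ≠ b → ¬ G.Adj a b := by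
      intro a ha b hb hne hadj'
      rw [hI, Finset.mem_image] at ha hb
      obtain ⟨U, hU, rfl⟩ := ha
      obtain ⟨W, hW, rfl⟩ := hb
      have hUW : U ≠ W := fun h => hne (by rw [h])
      exact hno U W hU hW hUW hadj'
    have hIcard : (I.card : ℝ) ≤ (Fintype.card V : ℝ) / 16 := indep_bound htough hn16 I hindep
    have hIeq : I.card = A.card := by
      rw [hI]
      apply Finset.card_image_of_injective
      intro a b h
      exact add_left_injective 1 (hinj h)
    rw [hIeq] at hIcard
    linarith
  obtain ⟨U, W, hUA, hWA, hUW, eUW⟩ := hXedge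
  -- s7 : common good vertex
  have hgU := hGood U hUA (hAA U hUA)
  have hgW := hGood W hWA (hAA W hWA)
  set GU := B.filter (fun j => G.Adj (f U) (f (j + 1))) with hGU
  set GW := B.filter (fun j => G.Adj (f W) (f (j + 1))) with hGW
  set T := (GU ∩ GW) \ {U, W} with hT
  have hTcard : (B.card : ℝ) - 2 * ((Fintype.card V : ℝ) / 16) - 4 ≤ (T.card : ℝ) := by
    have hinter : GU.card + GW.card - B.card ≤ (GU ∩ GW).card := by
      have h1 : (GU ∪ GW).card ≤ B.card := by
        apply Finset.card_le_card
        intro j hj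
        rw [Finset.mem_union] at hj
        rcases hj with h | h
        · exact (Finset.mem_filter.mp h).1
        · exact (Finset.mem_filter.mp h).1
      have h2 := Finset.card_inter_add_card_union GU GW
      omega
    have hsdiff : (GU ∩ GW).card - 2 ≤ T.card := by
      rw [hT]
      have h1 : ((GU ∩ GW) \ {U, W}).card ≥ (GU ∩ GW).card - ({U, W} : Finset (ZMod m)).card :=
        Finset.le_card_sdiff _ _
      have h2 : ({U, W} : Finset (ZMod m)).card ≤ 2 := Finset.card_insert_le _ _ |>.trans (by simp)
      omega
    have hinterR : (GU.card : ℝ) + GW.card - B.card ≤ ((GU ∩ GW).card : ℝ) := by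
      have hc : GU.card + GW.card ≤ (GU ∩ GW).card + B.card := by omega
      have := (Nat.cast_le (α := ℝ)).mpr hc
      push_cast at this
      linarith
    have hsdiffR : ((GU ∩ GW).card : ℝ) - 2 ≤ (T.card : ℝ) := by
      have hc : (GU ∩ GW).card ≤ T.card + 2 := by omega
      have := (Nat.cast_le (α := ℝ)).mpr hc
      push_cast at this
      linarith
    linarith
  have hTpos : (0 : ℝ) < (T.card : ℝ) := by linarith
  have hTne : T.Nonempty := by
    rw [← Finset.card_pos]
    by_contra h
    push_neg at h
    have h0 : T.card = 0 := by omega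
    rw [h0] at hTpos
    simp at hTpos
  obtain ⟨Vv, hVv⟩ := hTne
  rw [hT, Finset.mem_sdiff, Finset.mem_inter] at hVv
  obtain ⟨⟨hVvGU, hVvGW⟩, hVvnot⟩ := hVv
  rw [hGU, Finset.mem_filter] at hVvGU
  rw [hGW, Finset.mem_filter] at hVvGW
  have hVvU : Vv ≠ U := by
    intro h
    exact hVvnot (by rw [h]; simp)
  have hVvW : Vv ≠ W := by
    intro h
    exact hVvnot (by rw [h]; simp)
  exact hE3comb U W Vv hUA hWA hVvGU.1 (fun h => hUW h.symm) hVvU hVvW eUW hVvGU.2 hVvGW.2
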